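/- Let n ∈ ℕ. For every m with 0 ≤ m ≤ n+1, the assignment declaring a sieve S on [k] to be covering if and only if every morphism f : [l] ⟶ [k] with l < m belongs to S, defines a Grothendieck topology J_m on the n-truncated simplex category; moreover the map m ↦ J_m is a bijection from {0, 1, …, n+1} onto the set of all Grothendieck topologies on the n-truncated simplex category. In particular the n-truncated simplex category carries exactly n+2 Grothendieck topologies. -/

import Mathlib

open CategoryTheory Simplicial Opposite

namespace Stmt4Aux

open SimplexCategory CategoryTheory.Limits

variable {n : ℕ}

/-- The sieve of non-surjective maps into `X`. -/
def bsieve (X : SimplexCategory.Truncated n) : Sieve X where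
  arrows Y f := ¬ Function.Surjective f.hom.toOrderHom
  downward_closed := by
    intro Y Z f hf g hgf
    apply hf
    intro x
    obtain ⟨y, hy⟩ := hgf x
    exact ⟨g.hom.toOrderHom y, hy⟩

/-- The sieve of maps into `X` factoring through an object of length `< m`. -/
def tsieve (m : ℕ) (X : SimplexCategory.Truncated n) : Sieve X where
  arrows Y f := ∃ (Z : SimplexCategory.Truncated n) (u : Y ⟶ Z) (v : Z ⟶ X),
    Z.obj.len < m ∧ u ≫ v = f
  downward_closed := by
    rintro Y Z f ⟨W, u, v, hW, huv⟩ g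
    exact ⟨W, g ≫ u, v, hW, by rw [Category.assoc, huv]⟩

/-- The `m`-th Grothendieck topology on the truncated simplex category. -/
def Jtop (n m : ℕ) : GrothendieckTopology (SimplexCategory.Truncated n) where
  sieves X := {S | ∀ (Y : SimplexCategory.Truncated n) (f : Y ⟶ X), Y.obj.len < m → S f}
  top_mem' X := fun Y f _ => trivial
  pullback_stable' X Y S g hS := fun Z f hZ => hS Z (f ≫ g) hZ
  transitive' X S hS R hR := by
    intro Y f hY
    have h1 : Sieve.pullback f R ∈ _ := hR (hS Y f hY)
    have h2 := h1 Y (𝟙 Y) hY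
    simpa using h2

lemma mem_Jtop_iff {m : ℕ} {X : SimplexCategory.Truncated n} (S : Sieve X) :
    S ∈ Jtop n m X ↔ ∀ (Y : SimplexCategory.Truncated n) (f : Y ⟶ X),
      Y.obj.len < m → S f := Iff.rfl

lemma small_not_surj {Y X : SimplexCategory.Truncated n} (f : Y ⟶ X)
    (h : Y.obj.len < X.obj.len) : ¬ Function.Surjective f.hom.toOrderHom := by
  intro hs
  have := Fintype.card_le_of_surjective _ hs
  simp only [Fintype.card_fin] at this
  omega

lemma id_surj (X : SimplexCategory.Truncated n) :
    Function.Surjective (𝟙 X : X ⟶ X).hom.toOrderHom := fun x => ⟨x, rfl⟩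

/-- If some sieve in `J X` misses `f : Y ⟶ X`, then `bsieve Y` is covering. -/
lemma bsieve_mem_of_not_mem (J : GrothendieckTopology (SimplexCategory.Truncated n))
    {X Y : SimplexCategory.Truncated n} {S : Sieve X} (hS : S ∈ J X) (f : Y ⟶ X)
    (hf : ¬ S f) : bsieve Y ∈ J Y := by
  have hpb : S.pullback f ∈ J Y := J.pullback_stable f hS
  refine J.superset_covering ?_ hpb
  intro Z g hg hsurj
  -- g is surjective, hence a split epi; so f ∈ S, contradiction
  have : Epi (show Z.obj ⟶ Y.obj from g.hom) := epi_iff_surjective.mpr hsurj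
  have hsplit : IsSplitEpi (show Z.obj ⟶ Y.obj from g.hom) := isSplitEpi_of_epi _
  obtain ⟨⟨σ, hσ⟩⟩ := hsplit
  apply hf
  have h2 : S ((ObjectProperty.homMk σ ≫ g : Y ⟶ Y) ≫ f) := by
    have := S.downward_closed hg (ObjectProperty.homMk σ : Y ⟶ Z)
    simpa using this
  have h3 : (ObjectProperty.homMk σ ≫ g : Y ⟶ Y) = 𝟙 Y := InducedCategory.hom_ext hσ
  rwa [h3, Category.id_comp] at h2

/-- Key lemma: if `bsieve` is covering on some object of length `m` (whenever `m ≤ n`),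
then the sieve of maps factoring through length `< m` is covering everywhere. -/
lemma tsieve_mem (J : GrothendieckTopology (SimplexCategory.Truncated n)) (m : ℕ)
    (hw : m ≤ n → ∃ W : SimplexCategory.Truncated n, W.obj.len = m ∧ bsieve W ∈ J W) :
    ∀ (k : ℕ) (X : SimplexCategory.Truncated n), X.obj.len ≤ k → tsieve m X ∈ J X := by
  intro k
  induction k using Nat.strong_induction_on with
  | _ k ih =>
    intro X hXk
    by_cases hsmall : X.obj.len < m
    · -- the identity factors through X itself
      have : tsieve m X = ⊤ := by
        rw [← Sieve.id_mem_iff_eq_top]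
        exact ⟨X, 𝟙 X, 𝟙 X, hsmall, by simp⟩
      rw [this]
      exact J.top_mem X
    · push_neg at hsmall
      have hmn : m ≤ n := le_trans hsmall X.property
      obtain ⟨W, hWlen, hWJ⟩ := hw hmn
      -- a surjection g : X ⟶ W
      let g : X ⟶ W := ObjectProperty.homMk (SimplexCategory.Hom.mk
        ⟨fun i => ⟨min i.val W.obj.len, by omega⟩, fun a b hab => by
          simp only [Fin.mk_le_mk]
          have : a.val ≤ b.val := hab
          omega⟩)
      have hg : Function.Surjective g.hom.toOrderHom := by
        intro j
        refine ⟨⟨j.val, by have := j.isLt; omega⟩, ?_⟩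
        ext
        simp only [g, ObjectProperty.homMk_hom, SimplexCategory.Hom.toOrderHom_mk, OrderHom.coe_mk]
        change min j.val W.obj.len = j.val
        have := j.isLt
        omega
      have hR : (bsieve W).pullback g ∈ J X := J.pullback_stable g hWJ
      refine J.transitive hR (tsieve m X) ?_
      intro Y h hh
      -- hh : ¬ Surjective (h ≫ g)
      -- factor h through its image
      let h' : Y.obj ⟶ X.obj := h.hom
      have hIle : (image h').len ≤ X.obj.len := len_le_of_mono (image.ι h')
      have hIlt : (image h').len < X.obj.len := by
        rcases lt_or_eq_of_le hIle with h1 | h1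
        · exact h1
        · exfalso
          apply hh
          -- h ≫ g is surjective
          have hesurj : Function.Surjective (factorThruImage h').toOrderHom :=
            epi_iff_surjective.mp inferInstance
          have hιsurj : Function.Surjective (image.ι h').toOrderHom := by
            have hinj : Function.Injective (image.ι h').toOrderHom :=
              mono_iff_injective.mp inferInstance
            have hbij := (Fintype.bijective_iff_injective_and_card
              (image.ι h').toOrderHom).mpr ⟨hinj, by simp [h1]⟩
            exact hbij.2
          have hhsurj : Function.Surjective h'.toOrderHom := by
            rw [← image.fac h', comp_toOrderHom]
            exact (hιsurj.comp hesurj :)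
          intro z
          obtain ⟨x, hx⟩ := hg z
          obtain ⟨y, hy⟩ := hhsurj x
          exact ⟨y, by rw [← hx, ← hy]; rfl⟩
      let ZI : SimplexCategory.Truncated n := ⟨image h', le_trans (le_of_lt hIlt) X.property⟩
      have hZI : tsieve m ZI ∈ J ZI := ih (image h').len (lt_of_lt_of_le hIlt hXk) ZI le_rfl
      refine J.superset_covering ?_ (J.pullback_stable (ObjectProperty.homMk (factorThruImage h') : Y ⟶ ZI) hZI)
      rintro Z q ⟨W', u, v, hW', huv⟩
      refine ⟨W', u, v ≫ (ObjectProperty.homMk (image.ι h') : ZI ⟶ X), hW', ?_⟩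
      have : (q ≫ (ObjectProperty.homMk (factorThruImage h') : Y ⟶ ZI)) ≫ (ObjectProperty.homMk (image.ι h') : ZI ⟶ X)
          = q ≫ h := by
        rw [Category.assoc]
        congr 1
        exact InducedCategory.hom_ext (image.fac h')
      rw [← Category.assoc, huv, this]

end Stmt4Aux

theorem stmt4 (n : ℕ) :
    ∃ T : Fin (n + 2) → GrothendieckTopology (SimplexCategory.Truncated n),
      (∀ (m : Fin (n + 2)) (X : SimplexCategory.Truncated n) (S : Sieve X),
        S ∈ T m X ↔ ∀ (Y : SimplexCategory.Truncated n) (f : Y ⟶ X),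
          Y.obj.len < (m : ℕ) → S.arrows f) ∧
      Function.Bijective T ∧
      Nat.card (GrothendieckTopology (SimplexCategory.Truncated n)) = n + 2 := by
  classical
  have hbij : Function.Bijective (fun m : Fin (n + 2) => Stmt4Aux.Jtop n m.val) := by
    constructor
    · -- injectivity
      have aux : ∀ a b : Fin (n + 2), a.val < b.val → Stmt4Aux.Jtop n a.val ≠ Stmt4Aux.Jtop n b.val := by
        intro a b hab heq
        have han : a.val ≤ n := by have := b.isLt; omega
        set X : SimplexCategory.Truncated n :=
          ⟨SimplexCategory.mk a.val, by rw [SimplexCategory.len_mk]; exact han⟩ with hX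
        have hXlen : X.obj.len = a.val := SimplexCategory.len_mk a.val
        have h1 : Stmt4Aux.bsieve X ∈ Stmt4Aux.Jtop n a.val X := by
          intro Y f hY
          exact Stmt4Aux.small_not_surj f (by omega)
        rw [heq] at h1
        have h2 := h1 X (𝟙 X) (by omega)
        exact h2 (Stmt4Aux.id_surj X)
      intro a b hab
      rcases Nat.lt_trichotomy a.val b.val with h | h | h
      · exact absurd hab (aux a b h)
      · exact Fin.ext h
      · exact absurd hab.symm (aux b a h)
    · -- surjectivity
      intro J
      by_cases h : ∃ k, ∃ X : SimplexCategory.Truncated n, X.obj.len = k ∧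
          Stmt4Aux.bsieve X ∈ J X
      · obtain ⟨W, hWlen, hWJ⟩ := Nat.find_spec h
        have hmn : Nat.find h ≤ n := hWlen ▸ W.property
        refine ⟨⟨Nat.find h, by omega⟩, ?_⟩
        apply GrothendieckTopology.ext
        funext X
        ext S
        constructor
        · -- Jtop ≤ J
          intro hS
          have ht := Stmt4Aux.tsieve_mem J (Nat.find h)
            (fun _ => ⟨W, hWlen, hWJ⟩) X.obj.len X le_rfl
          refine J.superset_covering ?_ ht
          rintro Z q ⟨Z', u, v, hZ', huv⟩
          have hv : S v := hS Z' v hZ'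
          have := S.downward_closed hv u
          rwa [huv] at this
        · -- J ≤ Jtop
          intro hS Y f hY
          by_contra hf
          have := Stmt4Aux.bsieve_mem_of_not_mem J hS f hf
          have hle : Nat.find h ≤ Y.obj.len := Nat.find_le ⟨Y, rfl, this⟩
          have hY' : Y.obj.len < Nat.find h := hY
          omega
      · refine ⟨⟨n + 1, by omega⟩, ?_⟩
        apply GrothendieckTopology.ext
        funext X
        ext S
        constructor
        · intro hS
          have ht := Stmt4Aux.tsieve_mem J (n + 1) (fun hc => absurd hc (by omega))
            X.obj.len X le_rfl
          refine J.superset_covering ?_ ht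
          rintro Z q ⟨Z', u, v, hZ', huv⟩
          have hv : S v := hS Z' v hZ'
          have := S.downward_closed hv u
          rwa [huv] at this
        · intro hS Y f hY
          by_contra hf
          exact h ⟨Y.obj.len, Y, rfl, Stmt4Aux.bsieve_mem_of_not_mem J hS f hf⟩
  refine ⟨fun m => Stmt4Aux.Jtop n m.val, fun m X S => Iff.rfl, hbij, ?_⟩
  rw [← Nat.card_eq_of_bijective _ hbij]
  simp
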